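/- Let (y, z, θ) solve the translator system with μ = 0, λ ≠ 0 and f(θ₀) ≠ 0, where f(θ) = −(θ − θ₀ + λ)·sin θ. Then |y(s)| → +∞ both as s → +∞ and as s → −∞. -/

import Mathlib

open Real Filter Topology

/-- Lipschitz-type bound for sin relative to a zero of sin. -/
lemma sin_lip {x k : ℝ} (hk : Real.sin k = 0) : |Real.sin x| ≤ |x - k| := by
  have h : Real.sin x = 2 * Real.sin ((x - k)/2) * Real.cos ((x + k)/2) := by
    have h0 := Real.sin_sub_sin x k
    rw [hk, sub_zero] at h0
    exact h0
  have h1 : |Real.sin ((x - k)/2)| ≤ |(x - k)/2| := Real.abs_sin_le_abs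
  have h2 : |Real.cos ((x + k)/2)| ≤ 1 := Real.abs_cos_le_one _
  calc |Real.sin x| = 2 * |Real.sin ((x - k)/2)| * |Real.cos ((x + k)/2)| := by
        rw [h, abs_mul, abs_mul, abs_two]
    _ ≤ 2 * |(x - k)/2| * 1 := by
        apply mul_le_mul _ h2 (abs_nonneg _) (by positivity)
        apply mul_le_mul_of_nonneg_left h1; norm_num
    _ = |x - k| := by rw [abs_div, abs_two]; ring

/-- Forward uniqueness against the zero solution, via Grönwall. -/
lemma ode_zero {f g : ℝ → ℝ} {a b K : ℝ}
    (hf : ∀ t ∈ Set.Icc a b, HasDerivAt f (g t) t)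
    (hb : ∀ t ∈ Set.Icc a b, |g t| ≤ K * |f t|)
    (ha : f a = 0) : ∀ t ∈ Set.Icc a b, f t = 0 := by
  intro t ht
  have hcont : ContinuousOn f (Set.Icc a b) := fun x hx =>
    ((hf x hx).continuousAt).continuousWithinAt
  have key := norm_le_gronwallBound_of_norm_deriv_right_le (δ := 0) (K := K) (ε := 0)
    hcont (fun x hx => (hf x (Set.mem_Icc_of_Ico hx)).hasDerivWithinAt)
    (by simp [ha]) (fun x hx => by
      simpa using hb x (Set.mem_Icc_of_Ico hx))
  have h2 := key t ht
  rw [gronwallBound_ε0_δ0] at h2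
  simpa using h2

/-- Backward uniqueness against the zero solution. -/
lemma ode_zero' {f g : ℝ → ℝ} {a b K : ℝ} (hab : a ≤ b)
    (hf : ∀ t ∈ Set.Icc a b, HasDerivAt f (g t) t)
    (hbd : ∀ t ∈ Set.Icc a b, |g t| ≤ K * |f t|)
    (hb : f b = 0) : f a = 0 := by
  have hmem : ∀ t ∈ Set.Icc a b, a + b - t ∈ Set.Icc a b := by
    intro t ht
    exact ⟨by linarith [ht.2], by linarith [ht.1]⟩
  have hf' : ∀ t ∈ Set.Icc a b, HasDerivAt (fun t => f (a + b - t)) (-(g (a + b - t))) t := by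
    intro t ht
    have h1 : HasDerivAt (fun t : ℝ => a + b - t) (-1) t := by
      simpa using (hasDerivAt_id t).const_sub (a + b)
    have := (hf _ (hmem t ht)).comp t h1
    rw [show -(g (a + b - t)) = g (a + b - t) * (-1) by ring]; exact this
  have key := ode_zero (g := fun t => -(g (a + b - t))) (K := K) hf'
    (fun t ht => by simpa using hbd _ (hmem t ht)) (by simpa using hb)
  have := key b ⟨hab, le_refl b⟩
  simpa using this

/-- Linear growth from a derivative bounded below. -/
lemma grow_atTop {g G : ℝ → ℝ} (hd : ∀ s, HasDerivAt g (G s) s) {c s₀ : ℝ}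
    (hc : 0 < c) (h : ∀ s, s₀ ≤ s → c ≤ G s) : Tendsto g atTop atTop := by
  have hdiff : Differentiable ℝ g := fun x => (hd x).differentiableAt
  have hmono : MonotoneOn (fun x => g x - c * x) (Set.Ici s₀) := by
    apply monotoneOn_of_deriv_nonneg (convex_Ici s₀)
    · exact (hdiff.continuous.sub (continuous_const.mul continuous_id)).continuousOn
    · exact (hdiff.sub (differentiable_const c |>.mul differentiable_id)).differentiableOn
    · intro x hx
      rw [interior_Ici] at hx
      have hD : HasDerivAt (fun x => g x - c * x) (G x - c) x := by
        exact ((hd x).sub ((hasDerivAt_id x).const_mul c)).congr_deriv (by ring)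
      rw [hD.deriv]
      linarith [h x (le_of_lt hx)]
  refine tendsto_atTop_mono' atTop ?_ (tendsto_atTop_add_const_left _ (g s₀ - c * s₀)
    ((tendsto_const_mul_atTop_of_pos hc).mpr tendsto_id))
  filter_upwards [eventually_ge_atTop s₀] with x hx
  have := hmono (Set.self_mem_Ici) (Set.mem_Ici.mpr hx) hx
  simp only [id_eq] at this ⊢
  linarith

lemma grow_atBot {g G : ℝ → ℝ} (hd : ∀ s, HasDerivAt g (G s) s) {c s₀ : ℝ}
    (hc : 0 < c) (h : ∀ s, s₀ ≤ s → G s ≤ -c) : Tendsto g atTop atBot := by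
  have := grow_atTop (g := fun s => -g s) (G := fun s => -G s)
    (fun s => (hd s).neg) hc (fun s hs => by simpa using neg_le_neg (h s hs))
  have h2 : Tendsto (fun s => -(-g s)) atTop atBot := tendsto_neg_atTop_atBot.comp this
  simpa using h2

/-- From an eventual derivative sign bound, |y| → ∞. -/
lemma final_abs {y Y : ℝ → ℝ} (hy : ∀ s, HasDerivAt y (Y s) s) {c : ℝ} (hc : 0 < c)
    (h : (∀ᶠ s in atTop, c ≤ Y s) ∨ (∀ᶠ s in atTop, Y s ≤ -c)) :
    Tendsto (fun s => |y s|) atTop atTop := by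
  rcases h with h | h
  · rcases (eventually_atTop).1 h with ⟨s₀, hs₀⟩
    exact tendsto_abs_atTop_atTop.comp (grow_atTop hy hc hs₀)
  · rcases (eventually_atTop).1 h with ⟨s₀, hs₀⟩
    exact tendsto_abs_atBot_atTop.comp (grow_atBot hy hc hs₀)

/-- A continuous nowhere-vanishing function on ℝ has constant sign. -/
lemma sign_const {F : ℝ → ℝ} (hF : Continuous F) (h : ∀ s, F s ≠ 0) :
    (∀ s, 0 < F s) ∨ (∀ s, F s < 0) := by
  rcases (h 0).lt_or_gt with h0 | h0
  · right
    intro s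
    by_contra hs
    push_neg at hs
    have : (0 : ℝ) ∈ Set.uIcc (F 0) (F s) := Set.mem_uIcc.2 (Or.inl ⟨h0.le, hs⟩)
    obtain ⟨t, _, ht⟩ := intermediate_value_uIcc (hF.continuousOn (s := Set.uIcc 0 s)) this
    exact h t ht
  · left
    intro s
    by_contra hs
    push_neg at hs
    have : (0 : ℝ) ∈ Set.uIcc (F 0) (F s) := Set.mem_uIcc.2 (Or.inr ⟨hs, h0.le⟩)
    obtain ⟨t, _, ht⟩ := intermediate_value_uIcc (hF.continuousOn (s := Set.uIcc 0 s)) this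
    exact h t ht

/-- If g converges and its derivative converges, the derivative limit is 0. -/
lemma deriv_lim_zero {g G : ℝ → ℝ} (hd : ∀ s, HasDerivAt g (G s) s) {L A : ℝ}
    (hg : Tendsto g atTop (nhds L)) (hG : Tendsto G atTop (nhds A)) : A = 0 := by
  by_contra hA
  rcases lt_or_gt_of_ne hA with h0 | h0
  · -- A < 0 : g → atBot, contradiction
    have hev : ∀ᶠ s in atTop, G s ≤ A / 2 :=
      hG.eventually_le_const (by linarith)
    rcases (eventually_atTop).1 hev with ⟨s₀, hs₀⟩
    have : Tendsto g atTop atBot :=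
      grow_atBot hd (c := -(A/2)) (by linarith) (fun s hs => by linarith [hs₀ s hs])
    exact not_tendsto_atBot_of_tendsto_nhds hg this
  · have hev : ∀ᶠ s in atTop, A / 2 ≤ G s :=
      hG.eventually_const_le (by linarith)
    rcases (eventually_atTop).1 hev with ⟨s₀, hs₀⟩
    have : Tendsto g atTop atTop :=
      grow_atTop hd (c := A/2) (by linarith) hs₀
    exact not_tendsto_atTop_of_tendsto_nhds hg this

lemma final_nhds {y Y : ℝ → ℝ} {A : ℝ} (hy : ∀ s, HasDerivAt y (Y s) s)
    (hY : Tendsto Y atTop (𝓝 A)) (hA : A ≠ 0) :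
    Tendsto (fun s => |y s|) atTop atTop := by
  rcases lt_or_gt_of_ne hA with h0 | h0
  · exact final_abs hy (c := -(A/2)) (by linarith)
      (Or.inr (by simpa using hY.eventually_le_const (show A < A/2 by linarith)))
  · exact final_abs hy (c := A/2) (by linarith)
      (Or.inl (hY.eventually_const_le (show A/2 < A by linarith)))

lemma final_atTop {y Y : ℝ → ℝ} (hy : ∀ s, HasDerivAt y (Y s) s)
    (hY : Tendsto Y atTop atTop) : Tendsto (fun s => |y s|) atTop atTop :=
  final_abs hy one_pos (Or.inl (hY.eventually_ge_atTop 1))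

lemma final_atBot {y Y : ℝ → ℝ} (hy : ∀ s, HasDerivAt y (Y s) s)
    (hY : Tendsto Y atTop atBot) : Tendsto (fun s => |y s|) atTop atTop :=
  final_abs hy one_pos (Or.inr (by simpa using hY.eventually_le_atBot (-1)))

lemma key (lam θ₀ : ℝ) (y z θ : ℝ → ℝ)
    (hz0 : z 0 = 0) (hθ0 : θ 0 = θ₀)
    (hy : ∀ s : ℝ, HasDerivAt y (Real.exp (z s) * Real.cos (θ s)) s)
    (hz : ∀ s : ℝ, HasDerivAt z (Real.sin (θ s)) s)
    (hθ : ∀ s : ℝ, HasDerivAt θ (-lam * Real.exp (-z s) * Real.sin (θ s)) s)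
    (hlam : lam ≠ 0) (hsin : Real.sin θ₀ ≠ 0) :
    Tendsto (fun s => |y s|) atTop atTop := by
  -- conservation law : lam * exp (-z s) = θ s - θ₀ + lam
  have hcons : ∀ s, lam * Real.exp (-z s) = θ s - θ₀ + lam := by
    have hg : ∀ s, HasDerivAt (fun s => θ s - lam * Real.exp (-z s)) 0 s := by
      intro s
      have h1 : HasDerivAt (fun s => Real.exp (-z s))
          (Real.exp (-z s) * -Real.sin (θ s)) s := by
        simpa using ((hz s).neg).exp
      have h2 := (hθ s).sub (h1.const_mul lam)
      exact h2.congr_deriv (by ring)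
    have hc : ∀ s, θ s - lam * Real.exp (-z s) = θ 0 - lam * Real.exp (-z 0) := fun s =>
      is_const_of_deriv_eq_zero (fun x => (hg x).differentiableAt)
        (fun x => (hg x).deriv) s 0
    intro s
    have h3 := hc s
    rw [hθ0, hz0] at h3
    simp at h3
    linarith
  have hune : ∀ s, θ s - θ₀ + lam ≠ 0 := by
    intro s
    rw [← hcons s]
    positivity
  have hθ' : ∀ s, HasDerivAt θ (-(θ s - θ₀ + lam) * Real.sin (θ s)) s := by
    intro s
    convert hθ s using 1
    rw [← hcons s]; ring
  have hθdiff : Differentiable ℝ θ := fun s => (hθ' s).differentiableAt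
  have hθcont : Continuous θ := hθdiff.continuous
  -- sin (θ s) never vanishes
  have hsn : ∀ s, Real.sin (θ s) ≠ 0 := by
    intro s₁ hzero
    set k := θ s₁ with hk
    have main : ∀ a b : ℝ, a ≤ b → Set.Icc a b ⊆ Set.Icc (min 0 s₁) (max 0 s₁) →
        (θ b = k → θ a = k) ∧ (θ a = k → θ b = k) := by
      intro a b hab hsub
      obtain ⟨M, hM⟩ := (isCompact_Icc (a := min 0 s₁) (b := max 0 s₁)).exists_bound_of_continuousOn
        (f := fun t => θ t - θ₀ + lam) (by fun_prop)
      have hf : ∀ t ∈ Set.Icc a b,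
          HasDerivAt (fun t => θ t - k) (-(θ t - θ₀ + lam) * Real.sin (θ t)) t :=
        fun t _ => (hθ' t).sub_const k
      have hbd : ∀ t ∈ Set.Icc a b,
          |(-(θ t - θ₀ + lam) * Real.sin (θ t))| ≤ M * |θ t - k| := by
        intro t ht
        rw [abs_mul, abs_neg]
        have h1 : |θ t - θ₀ + lam| ≤ M := by simpa using hM t (hsub ht)
        have h2 : |Real.sin (θ t)| ≤ |θ t - k| := sin_lip hzero
        exact mul_le_mul h1 h2 (abs_nonneg _) ((abs_nonneg _).trans h1)
      constructor
      · intro hb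
        have := ode_zero' hab hf hbd (by simpa [sub_eq_zero] using hb)
        simpa [sub_eq_zero] using this
      · intro ha
        have := ode_zero hf hbd (by simpa [sub_eq_zero] using ha) b ⟨hab, le_refl b⟩
        simpa [sub_eq_zero] using this
    have hθ0k : θ 0 = k := by
      rcases le_total 0 s₁ with h01 | h01
      · exact (main 0 s₁ h01 (by simp [h01])).1 rfl
      · exact (main s₁ 0 h01 (by simp [h01])).2 rfl
    rw [hθ0] at hθ0k
    rw [← hθ0k] at hzero
    exact hsin hzero
  -- θ is trapped between consecutive multiples of π
  set n : ℤ := ⌊θ₀ / π⌋ with hn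
  have hπ : (0:ℝ) < π := Real.pi_pos
  have hlow : (n:ℝ) * π < θ₀ := by
    have h1 : (n:ℝ) ≤ θ₀ / π := Int.floor_le _
    have h2 : (n:ℝ) * π ≤ θ₀ := (le_div_iff₀ hπ).1 h1
    rcases h2.lt_or_eq with h | h
    · exact h
    · exfalso; apply hsin; rw [← h]; exact Real.sin_int_mul_pi n
  have hhigh : θ₀ < ((n:ℝ) + 1) * π := by
    have h1 : θ₀ / π < (n:ℝ) + 1 := Int.lt_floor_add_one _
    rw [div_lt_iff₀ hπ] at h1; linarith
  have hbound : ∀ s, (n:ℝ) * π < θ s ∧ θ s < ((n:ℝ) + 1) * π := by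
    intro s
    constructor
    · by_contra hc
      push_neg at hc
      have hmem : (n:ℝ) * π ∈ Set.uIcc (θ s) (θ 0) := by
        rw [Set.mem_uIcc]
        left; exact ⟨hc, by rw [hθ0]; exact hlow.le⟩
      obtain ⟨t, _, ht⟩ := intermediate_value_uIcc (hθcont.continuousOn) hmem
      exact hsn t (by rw [ht]; exact Real.sin_int_mul_pi n)
    · by_contra hc
      push_neg at hc
      have hmem : ((n:ℝ) + 1) * π ∈ Set.uIcc (θ 0) (θ s) := by
        rw [Set.mem_uIcc]
        left; exact ⟨by rw [hθ0]; exact hhigh.le, hc⟩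
      obtain ⟨t, _, ht⟩ := intermediate_value_uIcc (hθcont.continuousOn) hmem
      apply hsn t
      rw [ht, show ((n:ℝ) + 1) * π = ((n + 1 : ℤ) : ℝ) * π by push_cast; ring]
      exact Real.sin_int_mul_pi (n + 1)
  -- θ converges
  obtain ⟨L, hL⟩ : ∃ L, Tendsto θ atTop (𝓝 L) := by
    have hDne : ∀ s, -(θ s - θ₀ + lam) * Real.sin (θ s) ≠ 0 := fun s =>
      mul_ne_zero (neg_ne_zero.2 (hune s)) (hsn s)
    have hDcont : Continuous fun s => -(θ s - θ₀ + lam) * Real.sin (θ s) := by fun_prop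
    rcases sign_const hDcont hDne with hpos | hneg
    · have hmono : Monotone θ := (strictMono_of_hasDerivAt_pos hθ' hpos).monotone
      rcases tendsto_of_monotone hmono with h | h
      · exfalso
        obtain ⟨s, hs⟩ := (h.eventually_ge_atTop (((n:ℝ) + 1) * π)).exists
        exact absurd hs (not_le.2 (hbound s).2)
      · exact h
    · have hmono : Antitone θ := by
        have : StrictMono (fun s => -θ s) :=
          strictMono_of_hasDerivAt_pos (f' := fun s => -(-(θ s - θ₀ + lam) * Real.sin (θ s)))
            (fun s => (hθ' s).neg) (fun s => by simpa using hneg s)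
        intro a b hab
        simpa using (this.monotone hab)
      rcases tendsto_of_antitone hmono with h | h
      · exfalso
        obtain ⟨s, hs⟩ := (h.eventually_le_atBot ((n:ℝ) * π)).exists
        exact absurd hs (not_le.2 (hbound s).1)
      · exact h
  -- the limit is an equilibrium
  have hUL : Tendsto (fun s => θ s - θ₀ + lam) atTop (𝓝 (L - θ₀ + lam)) := by
    exact (hL.sub_const θ₀).add_const lam
  have hsinL : Tendsto (fun s => Real.sin (θ s)) atTop (𝓝 (Real.sin L)) :=
    (Real.continuous_sin.continuousAt (x := L)).tendsto.comp hL
  have hcosL : Tendsto (fun s => Real.cos (θ s)) atTop (𝓝 (Real.cos L)) :=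
    (Real.continuous_cos.continuousAt (x := L)).tendsto.comp hL
  have heq : -(L - θ₀ + lam) * Real.sin L = 0 :=
    deriv_lim_zero hθ' hL ((hUL.neg).mul hsinL)
  set U := L - θ₀ + lam with hU
  -- case analysis
  rcases eq_or_ne U 0 with hU0 | hU0
  · -- u → 0 : z → ∞
    have hexpz : Tendsto (fun s => Real.exp (z s)) atTop atTop := by
      have h1 : Tendsto (fun s => Real.exp (-z s)) atTop (𝓝 0) := by
        have h2 : ∀ s, Real.exp (-z s) = (θ s - θ₀ + lam) / lam := by
          intro s
          field_simp [← hcons s]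
          linarith [hcons s]
        rw [funext h2]
        have := hUL.div_const lam
        rwa [hU0, zero_div] at this
      have h3 : Tendsto (fun s => -z s) atTop atBot :=
        Real.tendsto_exp_comp_nhds_zero.mp h1
      have h4 : Tendsto z atTop atTop :=
        (tendsto_neg_atBot_atTop.comp h3).congr (fun x => neg_neg (z x))
      exact Real.tendsto_exp_atTop.comp h4
    rcases eq_or_ne (Real.cos L) 0 with hcL | hcL
    · -- cos L = 0 : y' → -lam * sin L ≠ 0
      have hLθ : L = θ₀ - lam := by rw [hU] at hU0; linarith
      have hsinL1 : Real.sin L ≠ 0 := by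
        intro h
        have := Real.sin_sq_add_cos_sq L
        rw [h, hcL] at this; norm_num at this
      have hYeq : ∀ s, Real.exp (z s) * Real.cos (θ s) =
          (-(lam * Real.sin L)) * (Real.sin (θ s - θ₀ + lam) / (θ s - θ₀ + lam)) := by
        intro s
        have hzs : Real.exp (z s) = lam / (θ s - θ₀ + lam) := by
          rw [← hcons s, Real.exp_neg]
          field_simp
        have hθs : θ s = L + (θ s - θ₀ + lam) := by rw [hLθ]; ring
        have hcosθ : Real.cos (θ s) = -(Real.sin L * Real.sin (θ s - θ₀ + lam)) := by
          conv_lhs => rw [hθs]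
          rw [Real.cos_add, hcL]
          ring
        rw [hzs, hcosθ]
        field_simp
      have hslope : Tendsto (fun s => Real.sin (θ s - θ₀ + lam) / (θ s - θ₀ + lam))
          atTop (𝓝 1) := by
        have h5 : Tendsto (fun x : ℝ => Real.sin x / x) (𝓝[≠] 0) (𝓝 1) := by
          have := hasDerivAt_iff_tendsto_slope.mp (Real.hasDerivAt_sin 0)
          rw [Real.cos_zero] at this
          apply this.congr'
          filter_upwards [self_mem_nhdsWithin] with x hx
          simp [slope_def_field, div_eq_iff, hx]
        have h6 : Tendsto (fun s => θ s - θ₀ + lam) atTop (𝓝[≠] 0) := by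
          apply tendsto_nhdsWithin_of_tendsto_nhds_of_eventually_within
          · rwa [hU0] at hUL
          · exact Eventually.of_forall fun s => hune s
        exact h5.comp h6
      apply final_nhds hy (A := -(lam * Real.sin L) * 1)
      · rw [funext hYeq]
        exact tendsto_const_nhds.mul hslope
      · simp [hlam, hsinL1]
    · -- cos L ≠ 0 : |y'| → ∞
      rcases hcL.lt_or_gt with hneg | hpos
      · exact final_atBot hy (hexpz.atTop_mul_neg hneg hcosL)
      · exact final_atTop hy (hexpz.atTop_mul_pos hpos hcosL)
  · -- U ≠ 0 : sin L = 0, cos L = ±1, y' → lam * cos L / U ≠ 0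
    have hsL : Real.sin L = 0 := by
      rcases mul_eq_zero.1 heq with h | h
      · exact absurd (neg_eq_zero.1 h) hU0
      · exact h
    have hcL : Real.cos L ≠ 0 := by
      intro h
      have := Real.sin_sq_add_cos_sq L
      rw [h, hsL] at this; norm_num at this
    have hYeq : ∀ s, Real.exp (z s) * Real.cos (θ s) =
        lam * Real.cos (θ s) / (θ s - θ₀ + lam) := by
      intro s
      have hzs : Real.exp (z s) = lam / (θ s - θ₀ + lam) := by
        rw [← hcons s, Real.exp_neg]
        field_simp
      rw [hzs]; ring
    apply final_nhds hy (A := lam * Real.cos L / U)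
    · rw [funext hYeq]
      exact ((tendsto_const_nhds.mul hcosL).div hUL hU0)
    · exact div_ne_zero (mul_ne_zero hlam hcL) hU0


theorem stmt10
    (lam μ θ₀ : ℝ) (y z θ : ℝ → ℝ)
    (hy0 : y 0 = 0) (hz0 : z 0 = 0) (hθ0 : θ 0 = θ₀)
    (hy : ∀ s : ℝ, HasDerivAt y (Real.exp (z s) * Real.cos (θ s)) s)
    (hz : ∀ s : ℝ, HasDerivAt z (Real.sin (θ s)) s)
    (hθ : ∀ s : ℝ, HasDerivAt θ
      (-lam * Real.exp (-z s) * Real.sin (θ s) +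
        μ * (Real.cos (θ s) - y s * Real.exp (-z s) * Real.sin (θ s))) s)
    (hμ : μ = 0) (hlam : lam ≠ 0)
    (hne : μ * Real.cos θ₀ - (θ₀ - θ₀ + lam) * Real.sin θ₀ ≠ 0) :
    Tendsto (fun s => |y s|) atTop atTop ∧
    Tendsto (fun s => |y s|) atBot atTop := by
  subst hμ
  have hsin : Real.sin θ₀ ≠ 0 := by
    intro h
    apply hne
    simp [h]
  have hθ1 : ∀ s, HasDerivAt θ (-lam * Real.exp (-z s) * Real.sin (θ s)) s := by
    intro s; simpa using hθ s
  constructor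
  · exact key lam θ₀ y z θ hz0 hθ0 hy hz hθ1 hlam hsin
  · have hy' : ∀ s : ℝ, HasDerivAt (fun s => -y (-s))
        (Real.exp (z (-s)) * Real.cos (-θ (-s))) s := by
      intro s
      have h1 := ((hy (-s)).comp s (hasDerivAt_neg s)).neg
      have h2 : -(Real.exp (z (-s)) * Real.cos (θ (-s)) * (-1)) =
          Real.exp (z (-s)) * Real.cos (-θ (-s)) := by
        rw [Real.cos_neg]; ring
      exact h1.congr_deriv h2
    have hz' : ∀ s : ℝ, HasDerivAt (fun s => z (-s)) (Real.sin (-θ (-s))) s := by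
      intro s
      have h1 := (hz (-s)).comp s (hasDerivAt_neg s)
      have h2 : Real.sin (θ (-s)) * (-1) = Real.sin (-θ (-s)) := by
        rw [Real.sin_neg]; ring
      exact h1.congr_deriv h2
    have hθ2 : ∀ s : ℝ, HasDerivAt (fun s => -θ (-s))
        (-(-lam) * Real.exp (-z (-s)) * Real.sin (-θ (-s))) s := by
      intro s
      have h1 := ((hθ1 (-s)).comp s (hasDerivAt_neg s)).neg
      have h2 : -(-lam * Real.exp (-z (-s)) * Real.sin (θ (-s)) * (-1)) =
          -(-lam) * Real.exp (-z (-s)) * Real.sin (-θ (-s)) := by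
        rw [Real.sin_neg]; ring
      exact h1.congr_deriv h2
    have hmain := key (-lam) (-θ₀) (fun s => -y (-s)) (fun s => z (-s)) (fun s => -θ (-s))
      (by simpa using hz0) (by simpa using hθ0) hy' hz' hθ2 (neg_ne_zero.2 hlam)
      (by simpa [Real.sin_neg] using hsin)
    have h2 := hmain.comp tendsto_neg_atBot_atTop
    exact h2.congr (fun s => by simp)
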